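/- For each p∈Ī₂∪J₃∪I₅, the operator ∂_{t_p} (defined by ∂_{t_p}(x^{α,i⃗})=i_p x^{α,i⃗−1_{[p]}}) is a derivation of the Lie algebra 𝒦. -/

import Mathlib

noncomputable section

/-- `ι_i = ℓ₁ + ⋯ + ℓ_i`. -/
def iot (ℓ : ℕ → ℕ) (i : ℕ) : ℕ := ∑ k ∈ Finset.Icc 1 i, ℓ k

/-- `I_{i,j} = {ι_{i-1}+1, …, ι_j}`. -/
def iSet (ℓ : ℕ → ℕ) (i j : ℕ) : Finset ℕ := Finset.Icc (iot ℓ (i - 1) + 1) (iot ℓ j)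

/-- The index-shift map `p ↦ p̄` (shift by `ι₆`). -/
def bar (ℓ : ℕ → ℕ) (p : ℕ) : ℕ := if p ≤ iot ℓ 6 then p + iot ℓ 6 else p - iot ℓ 6

/-- `K̄ = {p̄ : p ∈ K}`. -/
def barSet (ℓ : ℕ → ℕ) (K : Finset ℕ) : Finset ℕ := K.image (bar ℓ)

/-- `J_{i,j} = I_{i,j} ∪ Ī_{i,j}`. -/
def jSet (ℓ : ℕ → ℕ) (i j : ℕ) : Finset ℕ := iSet ℓ i j ∪ barSet ℓ (iSet ℓ i j)

/-- The semigroup `𝒥 = 𝒥₀ × 𝒥₁`, encoded as functions `ℕ → ℕ`; `j0 = true`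
means `𝒥₀ = ℕ` and `j0 = false` means `𝒥₀ = {0}`. -/
def jIdx (ℓ : ℕ → ℕ) (j0 : Bool) : Set (ℕ → ℕ) :=
  {i | (j0 = false → i 0 = 0) ∧
    ∀ p, 1 ≤ p →
      (p ∈ iSet ℓ 1 2 ∪ iSet ℓ 4 4 ∪ barSet ℓ (iSet ℓ 1 1) ∨ 2 * iot ℓ 6 < p) → i p = 0}

/-- `σ_p` (with `σ_p = σ_{p̄}`). -/
def sgm (F : Type*) [Field F] (ℓ : ℕ → ℕ) (p : ℕ) : ℕ → F :=
  let q := if p ≤ iot ℓ 6 then p else p - iot ℓ 6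
  if q ∈ iSet ℓ 1 3 then -Pi.single q (1 : F) - Pi.single (q + iot ℓ 6) (1 : F)
  else if q ∈ iSet ℓ 4 5 then -Pi.single q (1 : F)
  else 0

/-- The underlying space `𝒜`: the free `F`-module with basis `Γ × 𝒥`. -/
abbrev CA (F : Type*) [Field F] (ℓ : ℕ → ℕ) (Γ : AddSubgroup (ℕ → F)) (j0 : Bool) : Type _ :=
  (↥Γ × ↥(jIdx ℓ j0)) →₀ F

/-- The basis monomial `x^{α,i⃗}`, with the convention that it is `0` if `(α,i⃗) ∉ Γ × 𝒥`. -/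
def X (F : Type*) [Field F] (ℓ : ℕ → ℕ) (Γ : AddSubgroup (ℕ → F)) (j0 : Bool)
    (α : ℕ → F) (i : ℕ → ℕ) : CA F ℓ Γ j0 :=
  @dite _ (α ∈ Γ ∧ i ∈ jIdx ℓ j0) (Classical.dec _)
    (fun h => Finsupp.single (⟨α, h.1⟩, ⟨i, h.2⟩) 1) (fun _ => 0)

variable (F : Type*) [Field F] (ℓ : ℕ → ℕ) (Γ : AddSubgroup (ℕ → F)) (j0 : Bool)

/-- The commutative associative product on `𝒜`. -/
def mulA (u v : CA F ℓ Γ j0) : CA F ℓ Γ j0 :=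
  u.sum fun a ca => v.sum fun b cb =>
    (ca * cb) • X F ℓ Γ j0 (a.1.1 + b.1.1) (a.2.1 + b.2.1)

/-- The grading operator `∂*_p`. -/
def pstar (p : ℕ) (u : CA F ℓ Γ j0) : CA F ℓ Γ j0 :=
  u.sum fun a ca => (ca * a.1.1 p) • Finsupp.single a 1

/-- The down-grading operator `∂_{t_p}`. -/
def pt (p : ℕ) (u : CA F ℓ Γ j0) : CA F ℓ Γ j0 :=
  u.sum fun a ca => (ca * (a.2.1 p : F)) • X F ℓ Γ j0 a.1.1 (a.2.1 - Pi.single p 1)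

/-- `∂_p = ∂*_p + ∂_{t_p}`. -/
def dd (p : ℕ) (u : CA F ℓ Γ j0) : CA F ℓ Γ j0 := pstar F ℓ Γ j0 p u + pt F ℓ Γ j0 p u

/-- `∂ = Σ_{p∈J_{1,3}∪I_{4,5}} ∂*_p + Σ_{p∈I₆∪Ī_{4,6}} t_p ∂_{t_p}`. -/
def Dop (u : CA F ℓ Γ j0) : CA F ℓ Γ j0 :=
  (∑ p ∈ jSet ℓ 1 3 ∪ iSet ℓ 4 5, pstar F ℓ Γ j0 p u) +
    ∑ p ∈ iSet ℓ 6 6 ∪ barSet ℓ (iSet ℓ 4 6),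
      mulA F ℓ Γ j0 (X F ℓ Γ j0 0 (Pi.single p 1)) (pt F ℓ Γ j0 p u)

/-- The contact bracket (2.18):
`[u,v] = Σ_{p∈I} x^{σ_p}(∂_p u·∂_{p̄} v − ∂_{p̄} u·∂_p v) + (2−∂)(u)·∂₀(v) − ∂₀(u)·(2−∂)(v)`. -/
def brk (u v : CA F ℓ Γ j0) : CA F ℓ Γ j0 :=
  (∑ p ∈ iSet ℓ 1 6,
      mulA F ℓ Γ j0 (X F ℓ Γ j0 (sgm F ℓ p) 0)
        (mulA F ℓ Γ j0 (dd F ℓ Γ j0 p u) (dd F ℓ Γ j0 (bar ℓ p) v) -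
          mulA F ℓ Γ j0 (dd F ℓ Γ j0 (bar ℓ p) u) (dd F ℓ Γ j0 p v))) +
    mulA F ℓ Γ j0 ((2 : F) • u - Dop F ℓ Γ j0 u) (dd F ℓ Γ j0 0 v) -
    mulA F ℓ Γ j0 (dd F ℓ Γ j0 0 u) ((2 : F) • v - Dop F ℓ Γ j0 v)



/-! ### Auxiliary lemmas -/

section Aux

/-- Monotonicity of `iot`. -/
lemma iot_mono (ℓ : ℕ → ℕ) {i j : ℕ} (h : i ≤ j) : iot ℓ i ≤ iot ℓ j :=
  Finset.sum_le_sum_of_subset (Finset.Icc_subset_Icc_right h)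

lemma jIdx_add {ℓ : ℕ → ℕ} {j0 : Bool} {i j : ℕ → ℕ}
    (hi : i ∈ jIdx ℓ j0) (hj : j ∈ jIdx ℓ j0) : i + j ∈ jIdx ℓ j0 := by
  obtain ⟨hi0, hi1⟩ := hi
  obtain ⟨hj0, hj1⟩ := hj
  refine ⟨fun h => ?_, fun p hp hbad => ?_⟩
  · simp [Pi.add_apply, hi0 h, hj0 h]
  · simp [Pi.add_apply, hi1 p hp hbad, hj1 p hp hbad]

lemma jIdx_sub {ℓ : ℕ → ℕ} {j0 : Bool} {i : ℕ → ℕ}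
    (hi : i ∈ jIdx ℓ j0) (s : ℕ → ℕ) : i - s ∈ jIdx ℓ j0 := by
  obtain ⟨hi0, hi1⟩ := hi
  refine ⟨fun h => ?_, fun p hp hbad => ?_⟩
  · simp only [Pi.sub_apply, hi0 h]; omega
  · simp only [Pi.sub_apply, hi1 p hp hbad]; omega

variable {F : Type*} [Field F] {ℓ : ℕ → ℕ} {Γ : AddSubgroup (ℕ → F)} {j0 : Bool}

lemma X_pos {α : ℕ → F} {i : ℕ → ℕ} (h1 : α ∈ Γ) (h2 : i ∈ jIdx ℓ j0) :
    X F ℓ Γ j0 α i = Finsupp.single (⟨α, h1⟩, ⟨i, h2⟩) 1 := by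
  rw [X, dif_pos ⟨h1, h2⟩]

lemma X_neg {α : ℕ → F} {i : ℕ → ℕ} (h : ¬(α ∈ Γ ∧ i ∈ jIdx ℓ j0)) :
    X F ℓ Γ j0 α i = 0 := by
  rw [X, dif_neg h]

/-! basic linearity facts -/

lemma pt_zero (p : ℕ) : pt F ℓ Γ j0 p 0 = 0 := Finsupp.sum_zero_index

lemma pt_add (p : ℕ) (u v : CA F ℓ Γ j0) :
    pt F ℓ Γ j0 p (u + v) = pt F ℓ Γ j0 p u + pt F ℓ Γ j0 p v := by
  refine Finsupp.sum_add_index' (fun a => ?_) (fun a b₁ b₂ => ?_)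
  · simp
  · rw [add_mul, add_smul]

lemma pt_smul (p : ℕ) (c : F) (u : CA F ℓ Γ j0) :
    pt F ℓ Γ j0 p (c • u) = c • pt F ℓ Γ j0 p u := by
  unfold pt
  rw [Finsupp.sum_smul_index (fun a => by simp), Finsupp.smul_sum]
  exact Finsupp.sum_congr fun a _ => by rw [mul_assoc, mul_smul]

lemma pt_neg (p : ℕ) (u : CA F ℓ Γ j0) : pt F ℓ Γ j0 p (-u) = -pt F ℓ Γ j0 p u := by
  have := pt_smul p (-1 : F) u
  simpa using this

lemma pt_sub (p : ℕ) (u v : CA F ℓ Γ j0) :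
    pt F ℓ Γ j0 p (u - v) = pt F ℓ Γ j0 p u - pt F ℓ Γ j0 p v := by
  rw [sub_eq_add_neg, pt_add, pt_neg, sub_eq_add_neg]

lemma pt_sum {β : Type*} (p : ℕ) (s : Finset β) (f : β → CA F ℓ Γ j0) :
    pt F ℓ Γ j0 p (∑ x ∈ s, f x) = ∑ x ∈ s, pt F ℓ Γ j0 p (f x) := by
  classical
  induction s using Finset.induction_on with
  | empty => simp [pt_zero]
  | insert _ _ h ih => rw [Finset.sum_insert h, Finset.sum_insert h, pt_add, ih]

lemma pstar_zero (p : ℕ) : pstar F ℓ Γ j0 p 0 = 0 := Finsupp.sum_zero_index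

lemma pstar_add (p : ℕ) (u v : CA F ℓ Γ j0) :
    pstar F ℓ Γ j0 p (u + v) = pstar F ℓ Γ j0 p u + pstar F ℓ Γ j0 p v := by
  refine Finsupp.sum_add_index' (fun a => ?_) (fun a b₁ b₂ => ?_)
  · simp
  · rw [add_mul, add_smul]

lemma pstar_smul (p : ℕ) (c : F) (u : CA F ℓ Γ j0) :
    pstar F ℓ Γ j0 p (c • u) = c • pstar F ℓ Γ j0 p u := by
  unfold pstar
  rw [Finsupp.sum_smul_index (fun a => by simp), Finsupp.smul_sum]
  exact Finsupp.sum_congr fun a _ => by rw [mul_assoc, mul_smul]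

lemma mulA_zero_left (v : CA F ℓ Γ j0) : mulA F ℓ Γ j0 0 v = 0 := Finsupp.sum_zero_index

lemma mulA_zero_right (u : CA F ℓ Γ j0) : mulA F ℓ Γ j0 u 0 = 0 := by
  unfold mulA
  simp [Finsupp.sum_zero_index]

lemma mulA_add_left (u₁ u₂ v : CA F ℓ Γ j0) :
    mulA F ℓ Γ j0 (u₁ + u₂) v = mulA F ℓ Γ j0 u₁ v + mulA F ℓ Γ j0 u₂ v := by
  refine Finsupp.sum_add_index' (fun a => ?_) (fun a b₁ b₂ => ?_)
  · simp [Finsupp.sum]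
  · rw [← Finsupp.sum_add]
    exact Finsupp.sum_congr fun b _ => by rw [add_mul, add_smul]

lemma mulA_add_right (u v₁ v₂ : CA F ℓ Γ j0) :
    mulA F ℓ Γ j0 u (v₁ + v₂) = mulA F ℓ Γ j0 u v₁ + mulA F ℓ Γ j0 u v₂ := by
  unfold mulA
  rw [← Finsupp.sum_add]
  refine Finsupp.sum_congr fun a _ => ?_
  refine Finsupp.sum_add_index' (fun b => ?_) (fun b b₁ b₂ => ?_)
  · simp
  · rw [mul_add, add_smul]

lemma mulA_smul_left (c : F) (u v : CA F ℓ Γ j0) :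
    mulA F ℓ Γ j0 (c • u) v = c • mulA F ℓ Γ j0 u v := by
  unfold mulA
  rw [Finsupp.sum_smul_index (fun a => by simp [Finsupp.sum]), Finsupp.smul_sum]
  refine Finsupp.sum_congr fun a _ => ?_
  rw [Finsupp.smul_sum]
  exact Finsupp.sum_congr fun b _ => by rw [mul_assoc, mul_smul]

lemma mulA_smul_right (c : F) (u v : CA F ℓ Γ j0) :
    mulA F ℓ Γ j0 u (c • v) = c • mulA F ℓ Γ j0 u v := by
  unfold mulA
  rw [Finsupp.smul_sum]
  refine Finsupp.sum_congr fun a _ => ?_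
  rw [Finsupp.sum_smul_index (fun b => by simp), Finsupp.smul_sum]
  refine Finsupp.sum_congr fun b _ => ?_
  rw [mul_left_comm, mul_smul]

lemma mulA_sub_right (u v₁ v₂ : CA F ℓ Γ j0) :
    mulA F ℓ Γ j0 u (v₁ - v₂) = mulA F ℓ Γ j0 u v₁ - mulA F ℓ Γ j0 u v₂ := by
  have h := mulA_smul_right (-1 : F) u v₂
  rw [sub_eq_add_neg, sub_eq_add_neg, mulA_add_right]
  congr 1
  rw [show -v₂ = (-1 : F) • v₂ by simp, h]; simp

/-! behaviour on basis monomials -/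

lemma pt_single (p : ℕ) (a : ↥Γ × ↥(jIdx ℓ j0)) (c : F) :
    pt F ℓ Γ j0 p (Finsupp.single a c) =
      (c * (a.2.1 p : F)) • X F ℓ Γ j0 a.1.1 (a.2.1 - Pi.single p 1) :=
  Finsupp.sum_single_index (by simp)

lemma pstar_single (p : ℕ) (a : ↥Γ × ↥(jIdx ℓ j0)) (c : F) :
    pstar F ℓ Γ j0 p (Finsupp.single a c) = (c * a.1.1 p) • Finsupp.single a 1 :=
  Finsupp.sum_single_index (by simp)

lemma mulA_single_single (a b : ↥Γ × ↥(jIdx ℓ j0)) (c d : F) :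
    mulA F ℓ Γ j0 (Finsupp.single a c) (Finsupp.single b d) =
      (c * d) • X F ℓ Γ j0 (a.1.1 + b.1.1) (a.2.1 + b.2.1) := by
  unfold mulA
  rw [Finsupp.sum_single_index (by simp [Finsupp.sum]), Finsupp.sum_single_index (by simp)]

lemma pt_X {p : ℕ} {α : ℕ → F} {i : ℕ → ℕ} (h1 : α ∈ Γ) (h2 : i ∈ jIdx ℓ j0) :
    pt F ℓ Γ j0 p (X F ℓ Γ j0 α i) =
      ((i p : F)) • X F ℓ Γ j0 α (i - Pi.single p 1) := by
  rw [X_pos h1 h2, pt_single, one_mul]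

lemma pstar_X {p : ℕ} {α : ℕ → F} {i : ℕ → ℕ} (h1 : α ∈ Γ) (h2 : i ∈ jIdx ℓ j0) :
    pstar F ℓ Γ j0 p (X F ℓ Γ j0 α i) = (α p) • X F ℓ Γ j0 α i := by
  rw [X_pos h1 h2, pstar_single, one_mul, ← X_pos h1 h2]

lemma mulA_X_X {α β : ℕ → F} {i j : ℕ → ℕ} (h1 : α ∈ Γ) (h2 : i ∈ jIdx ℓ j0)
    (h3 : β ∈ Γ) (h4 : j ∈ jIdx ℓ j0) :
    mulA F ℓ Γ j0 (X F ℓ Γ j0 α i) (X F ℓ Γ j0 β j) = X F ℓ Γ j0 (α + β) (i + j) := by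
  rw [X_pos h1 h2, X_pos h3 h4, mulA_single_single, one_mul, one_smul]

lemma pt_X_of {p : ℕ} {α : ℕ → F} {i : ℕ → ℕ} (h : i p = 0) :
    pt F ℓ Γ j0 p (X F ℓ Γ j0 α i) = 0 := by
  by_cases hm : α ∈ Γ ∧ i ∈ jIdx ℓ j0
  · rw [X_pos hm.1 hm.2, pt_single]
    simp [h]
  · rw [X_neg hm, pt_zero]

/-- key exponent identity -/
lemma sub_single_add {p : ℕ} (i j : ℕ → ℕ) (h : i p ≠ 0) :
    (i - Pi.single p 1) + j = (i + j) - Pi.single p 1 := by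
  funext q
  simp only [Pi.add_apply, Pi.sub_apply]
  by_cases hq : q = p
  · subst hq; simp only [Pi.single_eq_same]; omega
  · simp [Pi.single_eq_of_ne hq]

/-- Leibniz rule for `pt` on basis elements. -/
lemma pt_mulA_single (p : ℕ) (a b : ↥Γ × ↥(jIdx ℓ j0)) (c d : F) :
    pt F ℓ Γ j0 p (mulA F ℓ Γ j0 (Finsupp.single a c) (Finsupp.single b d)) =
      mulA F ℓ Γ j0 (pt F ℓ Γ j0 p (Finsupp.single a c)) (Finsupp.single b d) +
        mulA F ℓ Γ j0 (Finsupp.single a c) (pt F ℓ Γ j0 p (Finsupp.single b d)) := by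
  obtain ⟨⟨α, hα⟩, ⟨i, hi⟩⟩ := a
  obtain ⟨⟨β, hβ⟩, ⟨j, hj⟩⟩ := b
  simp only [pt_single, mulA_single_single, mulA_smul_left, mulA_smul_right, pt_smul]
  rw [pt_X (add_mem hα hβ) (jIdx_add hi hj)]
  rw [X_pos hα (jIdx_sub hi (Pi.single p 1)), X_pos hβ (jIdx_sub hj (Pi.single p 1)),
    mulA_single_single, mulA_single_single]
  simp only [one_mul, mul_one]
  by_cases hip : i p = 0
  · by_cases hjp : j p = 0
    · simp [hip, hjp, Pi.add_apply]
    · rw [show i + (j - Pi.single p 1) = (i + j) - Pi.single p 1 by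
        rw [add_comm i j, add_comm i]; exact sub_single_add j i hjp]
      simp only [Pi.add_apply, Nat.cast_add, hip, Nat.cast_zero]
      module
  · by_cases hjp : j p = 0
    · rw [sub_single_add i j hip]
      simp only [Pi.add_apply, Nat.cast_add, hjp, Nat.cast_zero]
      module
    · rw [sub_single_add i j hip, show i + (j - Pi.single p 1) = (i + j) - Pi.single p 1 by
        rw [add_comm i j, add_comm i]; exact sub_single_add j i hjp]
      simp only [Pi.add_apply, Nat.cast_add]
      module

/-- Leibniz rule for `pt`. -/
lemma pt_mulA (p : ℕ) (u v : CA F ℓ Γ j0) :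
    pt F ℓ Γ j0 p (mulA F ℓ Γ j0 u v) =
      mulA F ℓ Γ j0 (pt F ℓ Γ j0 p u) v + mulA F ℓ Γ j0 u (pt F ℓ Γ j0 p v) := by
  induction u using Finsupp.induction_linear with
  | zero => simp [mulA_zero_left, pt_zero]
  | add f g hf hg =>
    rw [mulA_add_left, pt_add, hf, hg, pt_add, mulA_add_left, mulA_add_left]
    abel
  | single a c =>
    induction v using Finsupp.induction_linear with
    | zero => simp [mulA_zero_right, pt_zero]
    | add f g hf hg =>
      rw [mulA_add_right, pt_add, hf, hg, pt_add, mulA_add_right, mulA_add_right]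
      abel
    | single b d => exact pt_mulA_single p a b c d

/-- `pt` commutes with `pstar`. -/
lemma pt_pstar_comm (p q : ℕ) (u : CA F ℓ Γ j0) :
    pt F ℓ Γ j0 p (pstar F ℓ Γ j0 q u) = pstar F ℓ Γ j0 q (pt F ℓ Γ j0 p u) := by
  induction u using Finsupp.induction_linear with
  | zero => simp [pt_zero, pstar_zero]
  | add f g hf hg => rw [pstar_add, pt_add, hf, hg, pt_add, pstar_add]
  | single a c =>
    obtain ⟨⟨α, hα⟩, ⟨i, hi⟩⟩ := a
    rw [pstar_single, pt_smul, pt_single, pt_single, pstar_smul,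
      X_pos hα (jIdx_sub hi (Pi.single p 1)), pstar_single]
    simp only [one_mul]
    module

/-- `pt p` and `pt q` commute. -/
lemma pt_pt_comm (p q : ℕ) (u : CA F ℓ Γ j0) :
    pt F ℓ Γ j0 p (pt F ℓ Γ j0 q u) = pt F ℓ Γ j0 q (pt F ℓ Γ j0 p u) := by
  induction u using Finsupp.induction_linear with
  | zero => simp [pt_zero]
  | add f g hf hg => rw [pt_add, pt_add, hf, hg, pt_add, pt_add]
  | single a c =>
    obtain ⟨⟨α, hα⟩, ⟨i, hi⟩⟩ := a
    rw [pt_single, pt_smul, pt_X hα (jIdx_sub hi (Pi.single q 1)),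
      pt_single, pt_smul, pt_X hα (jIdx_sub hi (Pi.single p 1))]
    have he : (i - Pi.single q 1) - Pi.single p 1 = (i - Pi.single p 1) - Pi.single q 1 := by
      funext r; simp only [Pi.sub_apply]; omega
    rw [he]
    by_cases hpq : p = q
    · subst hpq; rfl
    · have h1 : (i - (Pi.single q 1 : ℕ → ℕ)) p = i p := by
        simp [Pi.sub_apply, Pi.single_eq_of_ne hpq]
      have h2 : (i - (Pi.single p 1 : ℕ → ℕ)) q = i q := by
        simp [Pi.sub_apply, Pi.single_eq_of_ne (Ne.symm hpq)]
      rw [h1, h2]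
      module

/-- `pt` commutes with `dd`. -/
lemma pt_dd_comm (p q : ℕ) (u : CA F ℓ Γ j0) :
    pt F ℓ Γ j0 p (dd F ℓ Γ j0 q u) = dd F ℓ Γ j0 q (pt F ℓ Γ j0 p u) := by
  unfold dd
  rw [pt_add, pt_pstar_comm, pt_pt_comm]

/-- `pt` commutes with `Dop` (when `p` avoids the second index set). -/
lemma pt_Dop_comm {p : ℕ}
    (hp : ∀ q ∈ iSet ℓ 6 6 ∪ barSet ℓ (iSet ℓ 4 6), p ≠ q) (u : CA F ℓ Γ j0) :
    pt F ℓ Γ j0 p (Dop F ℓ Γ j0 u) = Dop F ℓ Γ j0 (pt F ℓ Γ j0 p u) := by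
  unfold Dop
  rw [pt_add, pt_sum, pt_sum]
  congr 1
  · exact Finset.sum_congr rfl fun q _ => pt_pstar_comm p q u
  · refine Finset.sum_congr rfl fun q hq => ?_
    rw [pt_mulA, pt_X_of (Pi.single_eq_of_ne (hp q hq) 1), mulA_zero_left, zero_add,
      pt_pt_comm]

end Aux

/-- For each `p ∈ Ī₂ ∪ J₃ ∪ I₅`, the operator `∂_{t_p}` is a derivation of
the contact Lie algebra `𝒦`. -/
theorem pt_is_derivation
    {F : Type*} [Field F] [CharZero F] (ℓ : ℕ → ℕ) (Γ : AddSubgroup (ℕ → F)) (j0 : Bool)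
    (hℓ : 0 < iot ℓ 6)
    (hΓ1 : ∀ p ∈ jSet ℓ 1 3 ∪ iSet ℓ 4 5, (Pi.single p (1 : F) : ℕ → F) ∈ Γ)
    (hΓ2 : ∀ α ∈ Γ, ∀ p ∈ iSet ℓ 6 6 ∪ barSet ℓ (iSet ℓ 4 6), α p = 0)
    (hΓ3 : ∀ α ∈ Γ, ∀ p, 2 * iot ℓ 6 < p → α p = 0)
    (hΓ0 : (∃ α ∈ Γ, α 0 ≠ 0) → (Pi.single 0 (1 : F) : ℕ → F) ∈ Γ)
    (hJ0 : j0 = false → ∃ α ∈ Γ, α 0 ≠ 0) :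
    ∀ p ∈ barSet ℓ (iSet ℓ 2 2) ∪ jSet ℓ 3 3 ∪ iSet ℓ 5 5,
      ∀ u v : CA F ℓ Γ j0,
        pt F ℓ Γ j0 p (brk F ℓ Γ j0 u v) =
          brk F ℓ Γ j0 (pt F ℓ Γ j0 p u) v + brk F ℓ Γ j0 u (pt F ℓ Γ j0 p v)     := by
  intro p hp u v
  -- `p` is distinct from every index in `I₆ ∪ Ī_{4,6}`
  have h12 : iot ℓ 1 ≤ iot ℓ 2 := iot_mono ℓ (by norm_num)
  have h23 : iot ℓ 2 ≤ iot ℓ 3 := iot_mono ℓ (by norm_num)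
  have h34 : iot ℓ 3 ≤ iot ℓ 4 := iot_mono ℓ (by norm_num)
  have h45 : iot ℓ 4 ≤ iot ℓ 5 := iot_mono ℓ (by norm_num)
  have h56 : iot ℓ 5 ≤ iot ℓ 6 := iot_mono ℓ (by norm_num)
  have hpq : ∀ q ∈ iSet ℓ 6 6 ∪ barSet ℓ (iSet ℓ 4 6), p ≠ q := by
    intro q hq
    have hqb : (iot ℓ 5 + 1 ≤ q ∧ q ≤ iot ℓ 6) ∨
        (iot ℓ 6 + iot ℓ 3 + 1 ≤ q ∧ q ≤ iot ℓ 6 + iot ℓ 6) := by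
      rcases Finset.mem_union.1 hq with h | h
      · left
        rw [iSet, Finset.mem_Icc] at h
        norm_num at h
        exact h
      · right
        obtain ⟨r, hr, rfl⟩ := Finset.mem_image.1 h
        rw [iSet, Finset.mem_Icc] at hr
        norm_num at hr
        rw [bar, if_pos hr.2]
        omega
    have hpb : (iot ℓ 6 + iot ℓ 1 + 1 ≤ p ∧ p ≤ iot ℓ 6 + iot ℓ 2) ∨
        (iot ℓ 2 + 1 ≤ p ∧ p ≤ iot ℓ 3) ∨
        (iot ℓ 6 + iot ℓ 2 + 1 ≤ p ∧ p ≤ iot ℓ 6 + iot ℓ 3) ∨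
        (iot ℓ 4 + 1 ≤ p ∧ p ≤ iot ℓ 5) := by
      rcases Finset.mem_union.1 hp with h | h
      · rcases Finset.mem_union.1 h with h | h
        · left
          obtain ⟨r, hr, rfl⟩ := Finset.mem_image.1 h
          rw [iSet, Finset.mem_Icc] at hr
          norm_num at hr
          rw [bar, if_pos (le_trans hr.2 (le_trans h23 (le_trans h34 (le_trans h45 h56))))]
          omega
        · rcases Finset.mem_union.1 h with h | h
          · right; left
            rw [iSet, Finset.mem_Icc] at h
            norm_num at h
            exact h
          · right; right; left
            obtain ⟨r, hr, rfl⟩ := Finset.mem_image.1 h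
            rw [iSet, Finset.mem_Icc] at hr
            norm_num at hr
            rw [bar, if_pos (le_trans hr.2 (le_trans h34 (le_trans h45 h56)))]
            omega
      · right; right; right
        rw [iSet, Finset.mem_Icc] at h
        norm_num at h
        exact h
    omega
  -- main computation
  have key : ∀ q : ℕ,
      pt F ℓ Γ j0 p (mulA F ℓ Γ j0 (X F ℓ Γ j0 (sgm F ℓ q) 0)
        (mulA F ℓ Γ j0 (dd F ℓ Γ j0 q u) (dd F ℓ Γ j0 (bar ℓ q) v) -
          mulA F ℓ Γ j0 (dd F ℓ Γ j0 (bar ℓ q) u) (dd F ℓ Γ j0 q v))) =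
      mulA F ℓ Γ j0 (X F ℓ Γ j0 (sgm F ℓ q) 0)
        (mulA F ℓ Γ j0 (dd F ℓ Γ j0 q (pt F ℓ Γ j0 p u)) (dd F ℓ Γ j0 (bar ℓ q) v) -
          mulA F ℓ Γ j0 (dd F ℓ Γ j0 (bar ℓ q) (pt F ℓ Γ j0 p u)) (dd F ℓ Γ j0 q v)) +
      mulA F ℓ Γ j0 (X F ℓ Γ j0 (sgm F ℓ q) 0)
        (mulA F ℓ Γ j0 (dd F ℓ Γ j0 q u) (dd F ℓ Γ j0 (bar ℓ q) (pt F ℓ Γ j0 p v)) -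
          mulA F ℓ Γ j0 (dd F ℓ Γ j0 (bar ℓ q) u) (dd F ℓ Γ j0 q (pt F ℓ Γ j0 p v))) := by
    intro q
    rw [pt_mulA, pt_X_of (show (0 : ℕ → ℕ) p = 0 from rfl), mulA_zero_left, zero_add,
      pt_sub, pt_mulA, pt_mulA, pt_dd_comm, pt_dd_comm, pt_dd_comm, pt_dd_comm,
      ← mulA_add_right]
    congr 1
    abel
  have h2 : pt F ℓ Γ j0 p
      (mulA F ℓ Γ j0 ((2 : F) • u - Dop F ℓ Γ j0 u) (dd F ℓ Γ j0 0 v)) =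
      mulA F ℓ Γ j0 ((2 : F) • pt F ℓ Γ j0 p u - Dop F ℓ Γ j0 (pt F ℓ Γ j0 p u))
        (dd F ℓ Γ j0 0 v) +
      mulA F ℓ Γ j0 ((2 : F) • u - Dop F ℓ Γ j0 u) (dd F ℓ Γ j0 0 (pt F ℓ Γ j0 p v)) := by
    rw [pt_mulA, pt_sub, pt_smul, pt_Dop_comm hpq, pt_dd_comm]
  have h3 : pt F ℓ Γ j0 p
      (mulA F ℓ Γ j0 (dd F ℓ Γ j0 0 u) ((2 : F) • v - Dop F ℓ Γ j0 v)) =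
      mulA F ℓ Γ j0 (dd F ℓ Γ j0 0 (pt F ℓ Γ j0 p u)) ((2 : F) • v - Dop F ℓ Γ j0 v) +
      mulA F ℓ Γ j0 (dd F ℓ Γ j0 0 u)
        ((2 : F) • pt F ℓ Γ j0 p v - Dop F ℓ Γ j0 (pt F ℓ Γ j0 p v)) := by
    rw [pt_mulA, pt_sub, pt_smul, pt_Dop_comm hpq, pt_dd_comm]
  rw [brk, pt_sub, pt_add, pt_sum, Finset.sum_congr rfl (fun q _ => key q), h2, h3,
    Finset.sum_add_distrib, brk, brk]
  abel


end
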